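/- The quaternion SLERP formula agrees with the trigonometric formula: for pure unit quaternions q_a = (0, p_a), q_b = (0, p_b) with angle θ ∈ (0, π) between p_a and p_b, the vector part of q_a ((q_a)⁻¹ q_b)ᵗ equals (sin((1−t)θ)/sin θ) p_a + (sin(tθ)/sin θ) p_b for all t ∈ [0,1]. -/

import Mathlib

open Matrix Real

noncomputable def quat (a : ℝ) (u : Fin 3 → ℝ) : Quaternion ℝ := ⟨a, u 0, u 1, u 2⟩

noncomputable def norm3 (u : Fin 3 → ℝ) : ℝ := Real.sqrt (u ⬝ᵥ u)

def vec (q : Quaternion ℝ) : Fin 3 → ℝ := ![q.imI, q.imJ, q.imK]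

noncomputable def qpow (k : ℝ) (w : Fin 3 → ℝ) (t : ℝ) : Quaternion ℝ :=
  quat (Real.cos (t * k)) (Real.sin (t * k) • w)

/-- The quaternion SLERP formula agrees with the trigonometric SLERP formula:
the vector part of `q_a ((q_a)⁻¹ q_b)ᵗ` is
`(sin((1−t)θ)/sin θ) p_a + (sin(tθ)/sin θ) p_b`. -/
theorem quaternion_slerp_eq_trig_slerp (θ : ℝ) (pa pb : Fin 3 → ℝ)
    (hpa : norm3 pa = 1) (hpb : norm3 pb = 1)
    (hθ : 0 < θ) (hθπ : θ < Real.pi) (hdot : pa ⬝ᵥ pb = Real.cos θ) :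
    ∀ t ∈ Set.Icc (0 : ℝ) 1,
      vec (quat 0 pa * qpow θ ((Real.sin θ)⁻¹ • (-(pa ⨯₃ pb))) t) =
        (Real.sin ((1 - t) * θ) / Real.sin θ) • pa +
          (Real.sin (t * θ) / Real.sin θ) • pb := by
  intro t ht
  have hs : Real.sin θ ≠ 0 := ne_of_gt (Real.sin_pos_of_pos_of_lt_pi hθ hθπ)
  have hpa0 : (0:ℝ) ≤ pa ⬝ᵥ pa := by
    simp only [dotProduct, Fin.sum_univ_three]
    nlinarith [sq_nonneg (pa 0), sq_nonneg (pa 1), sq_nonneg (pa 2)]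
  have hpa1 : pa ⬝ᵥ pa = 1 := by
    have := hpa
    unfold norm3 at this
    nlinarith [Real.sq_sqrt hpa0]
  have hpa2 : pa 0 * pa 0 + pa 1 * pa 1 + pa 2 * pa 2 = 1 := by
    simpa [dotProduct, Fin.sum_univ_three] using hpa1
  have hdot3 : pa 0 * pb 0 + pa 1 * pb 1 + pa 2 * pb 2 = Real.cos θ := by
    simpa [dotProduct, Fin.sum_univ_three] using hdot
  have hsub : Real.sin ((1 - t) * θ) = Real.sin θ * Real.cos (t * θ)
      - Real.cos θ * Real.sin (t * θ) := by
    rw [show (1 - t) * θ = θ - t * θ by ring, Real.sin_sub]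
  simp only [_root_.vec, Quaternion.imI_mul, Quaternion.imJ_mul, Quaternion.imK_mul]
  funext i
  fin_cases i <;>
    simp [_root_.vec, quat, qpow, Quaternion.imI_mul, Quaternion.imJ_mul, Quaternion.imK_mul,
      cross_apply, hsub] <;>
    field_simp
  · linear_combination Real.sin (t*θ) * pb 0 * hpa2 - Real.sin (t*θ) * pa 0 * hdot3
  · linear_combination Real.sin (t*θ) * pb 1 * hpa2 - Real.sin (t*θ) * pa 1 * hdot3
  · linear_combination Real.sin (t*θ) * pb 2 * hpa2 - Real.sin (t*θ) * pa 2 * hdot3
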